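/- Fix p ∈ H. For every q ∈ H, the limit lim_{n→∞} |(q-p)^{*n}|^{1/n} exists and equals σ(q,p). -/

import Mathlib

local notation "ℍ" => Quaternion ℝ

/-- Convolution (star) product of coefficient sequences. -/
noncomputable def conv (a b : ℕ → ℍ) : ℕ → ℍ := fun n => ∑ k ∈ Finset.range (n+1), a k * b (n-k)

/-- Coefficient sequence of the polynomial `q - p` (right coefficients). -/
noncomputable def binomSeq (p : ℍ) : ℕ → ℍ := fun k => if k = 0 then -p else if k = 1 then 1 else 0

/-- n-fold star (convolution) power of a coefficient sequence. -/
noncomputable def convPow (a : ℕ → ℍ) : ℕ → ℕ → ℍ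
  | 0 => fun k => if k = 0 then 1 else 0
  | n+1 => conv (convPow a n) a

/-- The regular power `(q-p)^{*n}` evaluated at `q`. -/
noncomputable def starPow (p : ℍ) (n : ℕ) (q : ℍ) : ℍ :=
  ∑ k ∈ Finset.range (n+1), q^k * convPow (binomSeq p) n k

noncomputable def omegaDist (q p : ℍ) : ℝ :=
  Real.sqrt ((q.re - p.re)^2 + (‖q.im‖ + ‖p.im‖)^2)

/-- `q` and `p` lie in a common complex line `L_I = ℝ + Iℝ`. -/
def SameLine (q p : ℍ) : Prop :=
  ∃ I : ℍ, I^2 = -1 ∧ (∃ a b : ℝ, q = (a : ℍ) + b • I) ∧ (∃ a b : ℝ, p = (a : ℍ) + b • I)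

open Classical in
noncomputable def sigmaDist (q p : ℍ) : ℝ :=
  if SameLine q p then ‖q - p‖ else omegaDist q p

lemma conv_binomSeq (a : ℕ → ℍ) (p : ℍ) (k : ℕ) :
    conv a (binomSeq p) k = a k * (-p) + (if 1 ≤ k then a (k-1) else 0) := by
  rcases k with _ | k
  · simp [conv, binomSeq]
  · rw [conv]
    rw [Finset.sum_range_succ, Finset.sum_range_succ]
    rw [Finset.sum_eq_zero (fun j hj => ?_)]
    · simp [binomSeq]
      abel
    · have hj := Finset.mem_range.mp hj
      have h1 : k+1-j ≠ 0 := by omega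
      have h2 : k+1-j ≠ 1 := by omega
      simp [binomSeq, h1, h2]

lemma convPow_zero_of_lt (p : ℍ) : ∀ n k : ℕ, n < k → convPow (binomSeq p) n k = 0 := by
  intro n
  induction n with
  | zero => intro k hk; simp [convPow]; omega
  | succ n ih =>
    intro k hk
    rw [convPow, conv_binomSeq, ih k (by omega), ih (k-1) (by omega)]
    simp

lemma starPow_succ (p q : ℍ) (n : ℕ) :
    starPow p (n+1) q = q * starPow p n q - starPow p n q * p := by
  have h1 : starPow p (n+1) q
      = (∑ k ∈ Finset.range (n+1+1), q^k * convPow (binomSeq p) n k * (-p))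
        + ∑ k ∈ Finset.range (n+1+1), q^k * (if 1 ≤ k then convPow (binomSeq p) n (k-1) else 0) := by
    rw [starPow, ← Finset.sum_add_distrib]
    exact Finset.sum_congr rfl fun k _ => by
      rw [convPow, conv_binomSeq, mul_add, mul_assoc]
  have hA : (∑ k ∈ Finset.range (n+1+1), q^k * convPow (binomSeq p) n k * (-p))
      = -(starPow p n q * p) := by
    rw [Finset.sum_range_succ, convPow_zero_of_lt p n (n+1) (by omega)]
    rw [← Finset.sum_mul, starPow]
    simp
  have hB : (∑ k ∈ Finset.range (n+1+1), q^k * (if 1 ≤ k then convPow (binomSeq p) n (k-1) else 0))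
      = q * starPow p n q := by
    rw [Finset.sum_range_succ']
    rw [starPow, Finset.mul_sum]
    rw [if_neg (by omega : ¬ (1:ℕ) ≤ 0), mul_zero, add_zero]
    apply Finset.sum_congr rfl
    intro k _
    simp only [Nat.add_sub_cancel, if_pos (by omega : 1 ≤ k+1), pow_succ']
    rw [mul_assoc]
  rw [h1, hA, hB]
  abel


noncomputable def cAB (α β₁ : ℂ) (f : ℝ) : ℕ → ℂ × ℂ
  | 0 => (1, 0)
  | n+1 => ((α - β₁) * (cAB α β₁ f n).1 + f * (cAB α β₁ f n).2,
            (α - (starRingEnd ℂ) β₁) * (cAB α β₁ f n).2 - f * (cAB α β₁ f n).1)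

lemma cAB_closed (x y u e f v : ℝ) (hv : v ≠ 0) (hef : e^2 + f^2 = v^2) (n : ℕ) :
    cAB ((x:ℂ) + y * Complex.I) ((u:ℂ) + e * Complex.I) f n
      = ((((v+e)/(2*v) : ℝ) : ℂ) * (((x-u:ℝ):ℂ) + ((y-v:ℝ):ℂ) * Complex.I) ^ n
          + (((v-e)/(2*v) : ℝ) : ℂ) * (((x-u:ℝ):ℂ) + ((y+v:ℝ):ℂ) * Complex.I) ^ n,
         ((-(f/(2*v)) : ℝ) : ℂ) * Complex.I
           * ((((x-u:ℝ):ℂ) + ((y-v:ℝ):ℂ) * Complex.I) ^ n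
              - (((x-u:ℝ):ℂ) + ((y+v:ℝ):ℂ) * Complex.I) ^ n)) := by
  have hvC : (v:ℂ) ≠ 0 := Complex.ofReal_ne_zero.mpr hv
  have hefC : (e:ℂ)^2 + (f:ℂ)^2 = (v:ℂ)^2 := by
    have := congrArg (Complex.ofReal) hef; push_cast at this ⊢; exact this
  set α : ℂ := (x:ℂ) + y * Complex.I
  set β₁ : ℂ := (u:ℂ) + e * Complex.I
  set a : ℂ := ((x-u:ℝ):ℂ) + ((y-v:ℝ):ℂ) * Complex.I
  set b : ℂ := ((x-u:ℝ):ℂ) + ((y+v:ℝ):ℂ) * Complex.I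
  set l : ℂ := (((v+e)/(2*v) : ℝ) : ℂ)
  set m : ℂ := (((v-e)/(2*v) : ℝ) : ℂ)
  set ν : ℂ := ((-(f/(2*v)) : ℝ) : ℂ) * Complex.I
  have hβ : (starRingEnd ℂ) β₁ = (u:ℂ) - e * Complex.I := by
    simp [β₁, Complex.ext_iff]
  have h1 : (α - β₁) * l + f * ν = l * a := by
    simp only [α, β₁, a, l, ν]; push_cast
    linear_combination (-Complex.I/(2*v)) * hefC
  have h2 : (α - β₁) * m - f * ν = m * b := by
    simp only [α, β₁, b, m, ν]; push_cast
    linear_combination (Complex.I/(2*v)) * hefC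
  have h3 : (α - (starRingEnd ℂ) β₁) * ν - f * l = ν * a := by
    rw [hβ]; simp only [α, a, l, ν]; push_cast
    linear_combination (-((e:ℂ)+v)*f/(2*v)) * Complex.I_sq
  have h4 : (α - (starRingEnd ℂ) β₁) * ν + f * m = ν * b := by
    rw [hβ]; simp only [α, b, m, ν]; push_cast
    linear_combination (((v:ℂ)-e)*f/(2*v)) * Complex.I_sq
  induction n with
  | zero =>
    rw [show cAB α β₁ f 0 = (1, 0) from rfl]
    refine Prod.ext ?_ ?_
    · show (1:ℂ) = l * _ ^ 0 + m * _ ^ 0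
      simp only [pow_zero, mul_one, l, m]
      push_cast
      field_simp
      ring
    · show (0:ℂ) = ν * (_ ^ 0 - _ ^ 0)
      simp
  | succ n ih =>
    rw [cAB, ih]
    refine Prod.ext ?_ ?_
    · show (α - β₁) * (l * a ^ n + m * b ^ n) + f * (ν * (a^n - b^n))
        = l * a ^ (n+1) + m * b ^ (n+1)
      rw [pow_succ, pow_succ]
      linear_combination (a^n) * h1 + (b^n) * h2
    · show (α - (starRingEnd ℂ) β₁) * (ν * (a^n - b^n)) - f * (l * a ^ n + m * b ^ n)
        = ν * (a ^ (n+1) - b ^ (n+1))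
      rw [pow_succ, pow_succ]
      linear_combination (a^n) * h3 - (b^n) * h4



lemma mul_self_neg_one {K : ℍ} (h : K * K = -1) : K.re = 0 ∧ ‖K‖ = 1 := by
  have hn : Quaternion.normSq K * Quaternion.normSq K = 1 := by
    have := congrArg Quaternion.normSq h
    simpa [map_mul] using this
  have hnn : 0 ≤ Quaternion.normSq K := Quaternion.normSq_nonneg
  have h1 : Quaternion.normSq K = 1 := by nlinarith
  have hre : (K * K).re = -1 := by rw [h]; simp [Quaternion.re_one]
  rw [Quaternion.re_mul] at hre
  have hns : K.re^2 + K.imI^2 + K.imJ^2 + K.imK^2 = 1 := by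
    have := Quaternion.normSq_def' K; rw [h1] at this; linarith [this]
  have hre0 : K.re = 0 := by nlinarith
  refine ⟨hre0, ?_⟩
  have := Quaternion.normSq_eq_norm_mul_self (a := K)
  nlinarith [norm_nonneg K]

lemma star_quat_eq_neg {K : ℍ} (h : K.re = 0) : star K = -K := by
  ext <;> simp [h]

lemma star_liftAux {I : ℍ} (hI : I * I = -1) (z : ℂ) :
    star (Complex.liftAux I hI z) = Complex.liftAux I hI ((starRingEnd ℂ) z) := by
  have hre : I.re = 0 := (mul_self_neg_one hI).1
  simp only [Complex.liftAux_apply, star_add, star_smul, star_quat_eq_neg hre,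
    Complex.conj_re, Complex.conj_im]
  have hc : ((algebraMap ℝ ℍ) z.re) = ((z.re : ℝ) : ℍ) := rfl
  rw [hc, Quaternion.star_coe, Quaternion.star_smul, star_quat_eq_neg hre, smul_neg]
  simp [sub_eq_add_neg]

lemma norm_sq_liftAux {I : ℍ} (hI : I * I = -1) (z : ℂ) :
    Quaternion.normSq (Complex.liftAux I hI z) = Complex.normSq z := by
  have h : (Complex.liftAux I hI z) * star (Complex.liftAux I hI z)
      = ((Complex.normSq z : ℝ) : ℍ) := by
    rw [star_liftAux hI, ← map_mul, Complex.mul_conj]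
    exact (Complex.liftAux I hI).commutes (Complex.normSq z)
  have h2 := Quaternion.self_mul_star (a := Complex.liftAux I hI z)
  rw [h] at h2
  exact Quaternion.coe_injective h2.symm

lemma norm_liftAux {I : ℍ} (hI : I * I = -1) (z : ℂ) :
    ‖Complex.liftAux I hI z‖ = ‖z‖ := by
  have h1 : ‖Complex.liftAux I hI z‖^2 = Complex.normSq z := by
    rw [← norm_sq_liftAux hI z, Quaternion.normSq_eq_norm_mul_self, sq]
  rw [← Real.sqrt_sq (norm_nonneg _), h1, Complex.norm_def]


lemma starPow_zero (p q : ℍ) : starPow p 0 q = 1 := by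
  simp [starPow, convPow]

lemma K_mul_liftAux {I K : ℍ} (hI : I * I = -1) (hIK : K * I = -(I * K)) (z : ℂ) :
    K * Complex.liftAux I hI z = Complex.liftAux I hI ((starRingEnd ℂ) z) * K := by
  simp only [Complex.liftAux_apply, Complex.conj_re, Complex.conj_im]
  have hc : ((algebraMap ℝ ℍ) z.re) = ((z.re:ℝ) : ℍ) := rfl
  rw [hc, mul_add, add_mul]
  congr 1
  · exact (Quaternion.coe_commutes _ _).symm
  · rw [mul_smul_comm, hIK, smul_neg, smul_mul_assoc, neg_smul]

lemma norm_sq_pair {I K : ℍ} (hI : I*I = -1) (hK : K*K = -1) (hIK : K*I = -(I*K)) (A B : ℂ) :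
    ‖Complex.liftAux I hI A + Complex.liftAux I hI B * K‖^2
      = Complex.normSq A + Complex.normSq B := by
  set φ := Complex.liftAux I hI with hφ
  have hKre : K.re = 0 := (mul_self_neg_one hK).1
  have e1 : φ A * φ ((starRingEnd ℂ) A) = ((Complex.normSq A : ℝ) : ℍ) := by
    rw [← map_mul, Complex.mul_conj]; exact φ.commutes _
  have e2 : φ A * (φ B * K) = φ (A*B) * K := by rw [← mul_assoc, ← map_mul]
  have e3 : (φ B * K) * φ ((starRingEnd ℂ) A) = φ (B*A) * K := by
    rw [mul_assoc, K_mul_liftAux hI hIK, ← mul_assoc, ← map_mul, Complex.conj_conj]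
  have e4 : (φ B * K) * (φ B * K) = -((Complex.normSq B : ℝ) : ℍ) := by
    rw [mul_assoc, ← mul_assoc K, K_mul_liftAux hI hIK, mul_assoc (φ ((starRingEnd ℂ) B)),
      hK, mul_neg_one, mul_neg, ← map_mul, Complex.mul_conj]
    rw [show φ ((Complex.normSq B : ℝ) : ℂ) = ((Complex.normSq B : ℝ) : ℍ) from φ.commutes _]
  have hstar : star (φ A + φ B * K) = φ ((starRingEnd ℂ) A) - φ B * K := by
    have hc : K * φ ((starRingEnd ℂ) B) = φ B * K := by
      rw [K_mul_liftAux hI hIK, Complex.conj_conj]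
    rw [star_add, hφ, star_liftAux hI, star_mul, star_quat_eq_neg hKre, star_liftAux hI,
      neg_mul, hc, sub_eq_add_neg]
  have hmul : (φ A + φ B * K) * star (φ A + φ B * K)
      = (((Complex.normSq A + Complex.normSq B : ℝ)) : ℍ) := by
    rw [hstar, add_mul, mul_sub, mul_sub, e1, e2, e3, e4, mul_comm A B]
    push_cast
    abel
  have h2 := Quaternion.self_mul_star (a := φ A + φ B * K)
  rw [hmul] at h2
  have h3 : Quaternion.normSq (φ A + φ B * K) = Complex.normSq A + Complex.normSq B :=
    (Quaternion.coe_injective h2.symm)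
  rw [← h3, Quaternion.normSq_eq_norm_mul_self, sq]

lemma repA {I : ℍ} (hI : I*I = -1) (α β₁ : ℂ) (n : ℕ) :
    starPow (Complex.liftAux I hI β₁) n (Complex.liftAux I hI α)
      = Complex.liftAux I hI ((α - β₁)^n) := by
  induction n with
  | zero => rw [starPow_zero, pow_zero, map_one]
  | succ n ih =>
    rw [starPow_succ, ih, ← map_mul, ← map_mul, ← map_sub, pow_succ]
    congr 1
    ring

lemma repB {I K : ℍ} (hI : I*I = -1) (hK : K*K = -1) (hIK : K*I = -(I*K))
    (α β₁ : ℂ) (f : ℝ) (n : ℕ) :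
    starPow (Complex.liftAux I hI β₁ + f • K) n (Complex.liftAux I hI α)
      = Complex.liftAux I hI (cAB α β₁ f n).1 + Complex.liftAux I hI (cAB α β₁ f n).2 * K := by
  set φ := Complex.liftAux I hI with hφ
  have hfK : (f : ℝ) • K = φ ((f:ℝ):ℂ) * K := by
    rw [hφ]
    rw [show Complex.liftAux I hI ((f:ℝ):ℂ) = ((f:ℝ):ℍ) from (Complex.liftAux I hI).commutes _,
      Quaternion.coe_mul_eq_smul]
  induction n with
  | zero =>
    rw [starPow_zero]
    show (1:ℍ) = φ 1 + φ 0 * K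
    rw [map_one, map_zero, zero_mul, add_zero]
  | succ n ih =>
    rw [starPow_succ, ih]
    rw [show cAB α β₁ f (n+1)
      = ((α - β₁) * (cAB α β₁ f n).1 + f * (cAB α β₁ f n).2,
         (α - (starRingEnd ℂ) β₁) * (cAB α β₁ f n).2 - f * (cAB α β₁ f n).1) from rfl]
    set A := (cAB α β₁ f n).1
    set B := (cAB α β₁ f n).2
    have k1 : φ B * K * (φ ((f:ℝ):ℂ) * K) = -φ (B * ((f:ℝ):ℂ)) := by
      rw [mul_assoc, ← mul_assoc K, K_mul_liftAux hI hIK, Complex.conj_ofReal,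
        mul_assoc (φ ((f:ℝ):ℂ)), hK, mul_neg_one, mul_neg, ← map_mul]
    have k2 : φ B * K * φ β₁ = φ (B * (starRingEnd ℂ) β₁) * K := by
      rw [mul_assoc, K_mul_liftAux hI hIK, ← mul_assoc, ← map_mul]
    have m1 : φ α * (φ A + φ B * K) = φ (α*A) + φ (α*B) * K := by
      rw [mul_add, ← map_mul, ← mul_assoc, ← map_mul]
    have m2 : (φ A + φ B * K) * (φ β₁ + φ ((f:ℝ):ℂ) * K)
        = φ (A*β₁ - B*((f:ℝ):ℂ)) + φ (A*((f:ℝ):ℂ) + B*(starRingEnd ℂ) β₁) * K := by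
      rw [add_mul, mul_add, mul_add, ← map_mul, ← mul_assoc (φ A), ← map_mul, k2, k1,
        map_sub, map_add, add_mul]
      abel
    rw [hfK, m1, m2]
    show φ (α*A) + φ (α*B) * K
        - (φ (A*β₁ - B*((f:ℝ):ℂ)) + φ (A*((f:ℝ):ℂ) + B*(starRingEnd ℂ) β₁) * K)
      = φ ((α - β₁) * A + ((f:ℝ):ℂ) * B)
        + φ ((α - (starRingEnd ℂ) β₁) * B - ((f:ℝ):ℂ) * A) * K
    have c1 : (α - β₁) * A + ((f:ℝ):ℂ) * B = α*A - (A*β₁ - B*((f:ℝ):ℂ)) := by ring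
    have c2 : (α - (starRingEnd ℂ) β₁) * B - ((f:ℝ):ℂ) * A
        = α*B - (A*((f:ℝ):ℂ) + B*(starRingEnd ℂ) β₁) := by ring
    rw [c1, c2, map_sub φ (α*A), map_sub φ (α*B), sub_mul]
    abel

lemma quat_sq_neg_one {I : ℍ} (h0 : I.re = 0) (h1 : ‖I‖ = 1) : I * I = -1 := by
  have hs := Quaternion.self_mul_star (a := I)
  rw [star_quat_eq_neg h0, mul_neg] at hs
  have hn : Quaternion.normSq I = 1 := by
    rw [Quaternion.normSq_eq_norm_mul_self, h1, mul_one]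
  rw [hn] at hs
  have h2 : -(I * I) = (1 : ℍ) := by exact_mod_cast hs
  exact neg_eq_iff_eq_neg.mp h2

lemma anticomm {I K : ℍ} (hI0 : I.re = 0) (hK0 : K.re = 0)
    (h : (inner ℝ I K : ℝ) = 0) : K * I = -(I * K) := by
  have h1 : star (I * K) = K * I := by
    rw [star_mul, star_quat_eq_neg hI0, star_quat_eq_neg hK0, neg_mul_neg]
  have h2 : (I * K).re = 0 := by
    have hd := Quaternion.inner_def I K
    rw [star_quat_eq_neg hK0, mul_neg, Quaternion.re_neg] at hd
    rw [hd] at h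
    linarith
  rw [← h1, star_quat_eq_neg h2]

lemma exists_line (p : ℍ) : ∃ I : ℍ, I * I = -1 ∧ ∃ a b : ℝ, p = (a : ℍ) + b • I := by
  by_cases hp : p.im = 0
  · refine ⟨((Complex.I : ℂ) : ℍ), ?_, p.re, 0, ?_⟩
    · ext <;> simp [Quaternion.re_mul, Quaternion.imI_mul, Quaternion.imJ_mul, Quaternion.imK_mul, Quaternion.re_one, Quaternion.imI_one, Quaternion.imJ_one, Quaternion.imK_one]
    · rw [zero_smul, add_zero, ← Quaternion.re_add_im p, hp, add_zero, Quaternion.re_coe]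
  · have hn : ‖p.im‖ ≠ 0 := norm_ne_zero_iff.mpr hp
    refine ⟨‖p.im‖⁻¹ • p.im, ?_, p.re, ‖p.im‖, ?_⟩
    · apply quat_sq_neg_one
      · simp [Quaternion.re_smul]
      · rw [norm_smul, norm_inv, norm_norm, inv_mul_cancel₀ hn]
    · rw [smul_smul, mul_inv_cancel₀ hn, one_smul, Quaternion.re_add_im]

lemma sameLine_of_im_zero_left {q p : ℍ} (h : q.im = 0) : SameLine q p := by
  obtain ⟨I, hI, a, b, hp⟩ := exists_line p
  exact ⟨I, by rw [sq]; exact hI,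
    ⟨q.re, 0, by rw [zero_smul, add_zero, ← Quaternion.re_add_im q, h, add_zero, Quaternion.re_coe]⟩,
    ⟨a, b, hp⟩⟩

lemma normSq_combo (l m : ℝ) (hm : l + m = 1) (X Y : ℂ) :
    Complex.normSq ((l:ℂ)*X + (m:ℂ)*Y) + l*m*Complex.normSq (X - Y)
      = l*Complex.normSq X + m*Complex.normSq Y := by
  have hm' : m = 1 - l := by linarith
  subst hm'
  simp only [Complex.normSq_apply, Complex.add_re, Complex.add_im, Complex.mul_re, Complex.mul_im,
    Complex.sub_re, Complex.sub_im, Complex.ofReal_re, Complex.ofReal_im]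
  ring

open Filter in
lemma tendsto_pow_root (R : ℝ) (hR : 0 ≤ R) :
    Tendsto (fun n : ℕ => (R^n) ^ (1/(n:ℝ))) atTop (nhds R) := by
  rcases eq_or_lt_of_le hR with h0 | h0
  · refine Tendsto.congr' ?_ (tendsto_const_nhds (x := R))
    filter_upwards [eventually_ge_atTop 1] with n hn
    rw [← h0, zero_pow (by omega : n ≠ 0),
      Real.zero_rpow (one_div_ne_zero (Nat.cast_ne_zero.mpr (by omega)))]
  · refine Tendsto.congr' ?_ (tendsto_const_nhds (x := R))
    filter_upwards [eventually_ge_atTop 1] with n hn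
    rw [← Real.rpow_natCast R n, ← Real.rpow_mul hR]
    rw [mul_one_div, div_self (Nat.cast_ne_zero.mpr (by omega)), Real.rpow_one]

open Filter in
lemma tendsto_root_combo (l m A B : ℝ) (hl : 0 ≤ l) (hm : 0 < m) (hlm : l + m = 1)
    (hA : 0 ≤ A) (hAB : A ≤ B) :
    Tendsto (fun n : ℕ => Real.sqrt (l * A^n + m * B^n) ^ (1/(n:ℝ))) atTop
      (nhds (Real.sqrt B)) := by
  have hB : 0 ≤ B := le_trans hA hAB
  have hS : ∀ n : ℕ, 0 ≤ l * A^n + m * B^n := fun n => by positivity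
  have hBn : ∀ n : ℕ, 1 ≤ n → ((B^n : ℝ)) ^ (1/(2*(n:ℝ))) = Real.sqrt B := by
    intro n hn
    have hn' : (n:ℝ) ≠ 0 := Nat.cast_ne_zero.mpr (by omega)
    rw [← Real.rpow_natCast B n, ← Real.rpow_mul hB, Real.sqrt_eq_rpow]
    congr 1
    field_simp
  have key : ∀ n : ℕ, 1 ≤ n →
      Real.sqrt (l * A^n + m * B^n) ^ (1/(n:ℝ))
        = (l * A^n + m * B^n) ^ (1/(2*(n:ℝ))) := by
    intro n hn
    rw [Real.sqrt_eq_rpow, ← Real.rpow_mul (hS n)]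
    congr 1
    ring
  have hlow : Tendsto (fun n : ℕ => m ^ (1/(2*(n:ℝ))) * Real.sqrt B) atTop
      (nhds (Real.sqrt B)) := by
    have h1 : Tendsto (fun n : ℕ => 1/(2*(n:ℝ))) atTop (nhds 0) := by
      have := tendsto_const_div_atTop_nhds_zero_nat (1/2 : ℝ)
      refine this.congr fun n => ?_
      rw [div_div]
    have h2 : Tendsto (fun n : ℕ => m ^ (1/(2*(n:ℝ)))) atTop (nhds 1) := by
      have := Filter.Tendsto.rpow (tendsto_const_nhds (x := m) (f := atTop)) h1
        (Or.inl hm.ne')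
      simpa using this
    simpa using h2.mul (tendsto_const_nhds (x := Real.sqrt B))
  refine tendsto_of_tendsto_of_tendsto_of_le_of_le' hlow tendsto_const_nhds ?_ ?_
  · filter_upwards [eventually_ge_atTop 1] with n hn
    rw [key n hn]
    have hmB : m * B^n ≤ l * A^n + m * B^n := by nlinarith [pow_nonneg hA n]
    calc m ^ (1/(2*(n:ℝ))) * Real.sqrt B
        = (m * B^n) ^ (1/(2*(n:ℝ))) := by
          rw [Real.mul_rpow hm.le (pow_nonneg hB n), hBn n hn]
      _ ≤ (l * A^n + m * B^n) ^ (1/(2*(n:ℝ))) :=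
          Real.rpow_le_rpow (by positivity) hmB (by positivity)
  · filter_upwards [eventually_ge_atTop 1] with n hn
    rw [key n hn]
    have hub : l * A^n + m * B^n ≤ B^n := by
      nlinarith [pow_le_pow_left₀ hA hAB n, pow_nonneg hA n, pow_nonneg hB n]
    calc (l * A^n + m * B^n) ^ (1/(2*(n:ℝ))) ≤ (B^n) ^ (1/(2*(n:ℝ))) :=
          Real.rpow_le_rpow (hS n) hub (by positivity)
      _ = Real.sqrt B := hBn n hn


set_option maxHeartbeats 2000000 in
open Filter in
theorem starPow_norm_root_tendsto (p q : ℍ) :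
    Filter.Tendsto (fun n : ℕ => ‖starPow p n q‖ ^ (1/(n:ℝ))) Filter.atTop
      (nhds (sigmaDist q p)) := by
  by_cases hsl : SameLine q p
  · -- same line case
    obtain ⟨I, hI2, ⟨xa, xb, hq⟩, ⟨ua, ub, hp⟩⟩ := id hsl
    have hI : I * I = -1 := by rw [← sq]; exact hI2
    have happ : ∀ z : ℂ, Complex.liftAux I hI z = ((z.re : ℝ) : ℍ) + z.im • I := fun z => by
      rw [Complex.liftAux_apply]; rfl
    set α : ℂ := ⟨xa, xb⟩
    set β : ℂ := ⟨ua, ub⟩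
    have hqφ : q = Complex.liftAux I hI α := by rw [happ]; exact hq
    have hpφ : p = Complex.liftAux I hI β := by rw [happ]; exact hp
    have hnorm : ∀ n : ℕ, ‖starPow p n q‖ = ‖α - β‖ ^ n := by
      intro n
      rw [hqφ, hpφ, repA hI, norm_liftAux, norm_pow]
    have hqp : ‖q - p‖ = ‖α - β‖ := by
      rw [hqφ, hpφ, ← map_sub, norm_liftAux]
    have hfun : (fun n : ℕ => ‖starPow p n q‖ ^ (1/(n:ℝ)))
        = fun n : ℕ => ((‖α - β‖)^n) ^ (1/(n:ℝ)) := funext fun n => by rw [hnorm]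
    rw [sigmaDist, if_pos hsl, hqp, hfun]
    exact tendsto_pow_root _ (by positivity)
  · -- distinct lines case
    have hqim : q.im ≠ 0 := fun h => hsl (sameLine_of_im_zero_left h)
    have hy : 0 < ‖q.im‖ := norm_pos_iff.mpr hqim
    set y := ‖q.im‖ with hydef
    set I : ℍ := y⁻¹ • q.im with hIdef
    have hI0 : I.re = 0 := by rw [hIdef, Quaternion.re_smul, Quaternion.re_im, smul_zero]
    have hInorm : ‖I‖ = 1 := by
      rw [hIdef, norm_smul, norm_inv, norm_norm, inv_mul_cancel₀ hy.ne']
    have hI : I * I = -1 := quat_sq_neg_one hI0 hInorm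
    have hqrep : q = (q.re : ℍ) + y • I := by
      rw [hIdef, smul_smul, mul_inv_cancel₀ hy.ne', one_smul, Quaternion.re_add_im]
    set e : ℝ := inner ℝ p.im I with hedef
    set w : ℍ := p.im - e • I with hwdef
    have hw0 : w.re = 0 := by
      rw [hwdef, Quaternion.re_sub, Quaternion.re_smul, Quaternion.re_im, hI0, smul_zero, sub_zero]
    have hwI : (inner ℝ w I : ℝ) = 0 := by
      rw [hwdef, inner_sub_left, real_inner_smul_left, real_inner_self_eq_norm_mul_norm, hInorm]
      simp [hedef]
    have hwne : w ≠ 0 := by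
      intro h
      apply hsl
      refine ⟨I, by rw [sq]; exact hI, ⟨q.re, y, hqrep⟩, ⟨p.re, e, ?_⟩⟩
      have him : p.im = e • I := by rwa [hwdef, sub_eq_zero] at h
      rw [← him, Quaternion.re_add_im]
    have hf : 0 < ‖w‖ := norm_pos_iff.mpr hwne
    set f := ‖w‖ with hfdef
    set K : ℍ := f⁻¹ • w with hKdef
    have hK0 : K.re = 0 := by rw [hKdef, Quaternion.re_smul, hw0, smul_zero]
    have hKnorm : ‖K‖ = 1 := by
      rw [hKdef, norm_smul, norm_inv, norm_norm, inv_mul_cancel₀ hf.ne']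
    have hK : K * K = -1 := quat_sq_neg_one hK0 hKnorm
    have hIK : K * I = -(I * K) := by
      apply anticomm hI0 hK0
      rw [hKdef, real_inner_smul_right, real_inner_comm, hwI, mul_zero]
    have hfK : f • K = w := by rw [hKdef, smul_smul, mul_inv_cancel₀ hf.ne', one_smul]
    have hprep : p = (p.re : ℍ) + e • I + f • K := by
      rw [hfK, hwdef, add_assoc, add_sub_cancel, Quaternion.re_add_im]
    set v := ‖p.im‖ with hvdef
    have hev : e^2 + f^2 = v^2 := by
      have him : p.im = e • I + w := by rw [hwdef, add_sub_cancel]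
      have horth : (inner ℝ (e • I) w : ℝ) = 0 := by
        rw [real_inner_smul_left, real_inner_comm, hwI, mul_zero]
      have hpyth := norm_add_sq_real (e • I) w
      rw [horth, mul_zero, add_zero] at hpyth
      rw [hvdef, him, hpyth, norm_smul, hInorm, mul_one, Real.norm_eq_abs, sq_abs, ← hfdef]
    have hv : 0 < v := by nlinarith [norm_nonneg p.im, hf, hev]
    set l := (v+e)/(2*v) with hldef
    set m := (v-e)/(2*v) with hmdef
    have hl0 : 0 ≤ l := by
      apply div_nonneg _ (by positivity)
      nlinarith
    have hm0 : 0 < m := by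
      apply div_pos _ (by positivity)
      nlinarith
    have hlm : l + m = 1 := by rw [hldef, hmdef]; field_simp; ring
    have hlmv : l * m = (f/(2*v))^2 := by
      rw [hldef, hmdef]
      field_simp
      nlinarith
    set x := q.re with hxdef
    set u := p.re with hudef
    set α : ℂ := (x:ℂ) + (y:ℂ)*Complex.I with hαdef
    set β₁ : ℂ := (u:ℂ) + (e:ℂ)*Complex.I with hβdef
    set A := (x-u)^2 + (y-v)^2 with hAdef
    set B := (x-u)^2 + (y+v)^2 with hBdef
    have hqφ : q = Complex.liftAux I hI α := by
      rw [Complex.liftAux_apply]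
      have h1 : α.re = x := by simp [hαdef]
      have h2 : α.im = y := by simp [hαdef]
      rw [h1, h2]
      exact hqrep
    have hpφ : p = Complex.liftAux I hI β₁ + f • K := by
      rw [Complex.liftAux_apply]
      have h1 : β₁.re = u := by simp [hβdef]
      have h2 : β₁.im = e := by simp [hβdef]
      rw [h1, h2]
      exact hprep
    have hnsq : ∀ zc : ℝ, Complex.normSq (((zc:ℝ):ℂ)) = zc^2 := fun zc => by
      rw [Complex.normSq_ofReal]; ring
    have haC : Complex.normSq (((x-u:ℝ):ℂ) + ((y-v:ℝ):ℂ) * Complex.I) = A := by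
      rw [hAdef]
      simp [Complex.normSq_apply]
      ring
    have hbC : Complex.normSq (((x-u:ℝ):ℂ) + ((y+v:ℝ):ℂ) * Complex.I) = B := by
      rw [hBdef]
      simp [Complex.normSq_apply]
      ring
    have hnorm : ∀ n : ℕ, ‖starPow p n q‖ = Real.sqrt (l * A^n + m * B^n) := by
      intro n
      have h1 : ‖starPow p n q‖^2 = l * A^n + m * B^n := by
        rw [hqφ, hpφ, repB hI hK hIK α β₁ f n, norm_sq_pair hI hK hIK,
          cAB_closed x y u e f v hv.ne' hev n]
        have h2 : Complex.normSq ((((-(f/(2*v)):ℝ)):ℂ) * Complex.I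
            * ((((x-u:ℝ):ℂ) + ((y-v:ℝ):ℂ) * Complex.I)^n
               - (((x-u:ℝ):ℂ) + ((y+v:ℝ):ℂ) * Complex.I)^n))
            = l * m * Complex.normSq ((((x-u:ℝ):ℂ) + ((y-v:ℝ):ℂ) * Complex.I)^n
               - (((x-u:ℝ):ℂ) + ((y+v:ℝ):ℂ) * Complex.I)^n) := by
          rw [map_mul, map_mul, Complex.normSq_I, mul_one, hnsq, hlmv]
          ring
        rw [h2]
        have h3 := normSq_combo l m hlm
          ((((x-u:ℝ):ℂ) + ((y-v:ℝ):ℂ) * Complex.I)^n)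
          ((((x-u:ℝ):ℂ) + ((y+v:ℝ):ℂ) * Complex.I)^n)
        rw [h3, map_pow Complex.normSq, map_pow Complex.normSq, haC, hbC]
      have h4 : 0 ≤ l * A^n + m * B^n := by
        have hA0 : 0 ≤ A := by rw [hAdef]; positivity
        have hB0 : 0 ≤ B := by rw [hBdef]; positivity
        positivity
      rw [← Real.sqrt_sq (norm_nonneg (starPow p n q)), h1]
    have hfun : (fun n : ℕ => ‖starPow p n q‖ ^ (1/(n:ℝ)))
        = fun n : ℕ => Real.sqrt (l * A^n + m * B^n) ^ (1/(n:ℝ)) :=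
      funext fun n => by rw [hnorm]
    rw [sigmaDist, if_neg hsl, hfun]
    have hOm : omegaDist q p = Real.sqrt B := by
      rw [omegaDist, hBdef]
    rw [hOm]
    apply tendsto_root_combo l m A B hl0 hm0 hlm (by rw [hAdef]; positivity)
    rw [hAdef, hBdef]
    nlinarith [hv, hy]
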